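/- Let G be a finite connected simple graph with a fixed vertex s, and let o be an acyclic orientation with reachable set R(o) ≠ V (from s). Define o' by reversing all edges between R(o) and V \\ R(o) and keeping the others. Then o' is acyclic and R(o) ⊊ R(o'). -/
import Mathlib


/-- The set of vertices reachable from `s` via directed paths of `o`. -/
def reachSet {V : Type*} (s : V) (o : V → V → Prop) : Set V :=
  {w : V | Relation.ReflTransGen o s w}

/-- Reverse all edges between the reachable set of `s` and its complement. -/
def flipStep {V : Type*} (s : V) (o : V → V → Prop) : V → V → Prop :=
  fun u v =>
    (((u ∈ reachSet s o) ↔ (v ∈ reachSet s o)) ∧ o u v) ∨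
    (¬((u ∈ reachSet s o) ↔ (v ∈ reachSet s o)) ∧ o v u)

theorem stmt7 {V : Type*} [Fintype V] (G : SimpleGraph V) (hconn : G.Connected)
    (s : V) (o : V → V → Prop)
    (hsub : ∀ u v, o u v → G.Adj u v)
    (htotal : ∀ u v, G.Adj u v → o u v ∨ o v u)
    (hanti : ∀ u v, o u v → ¬ o v u)
    (hacyc : ∀ v, ¬ Relation.TransGen o v v)
    (hR : reachSet s o ≠ Set.univ) :
    (∀ v, ¬ Relation.TransGen (flipStep s o) v v) ∧
      reachSet s o ⊂ reachSet s (flipStep s o) := by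
  classical
  have hclose : ∀ u v, u ∈ reachSet s o → o u v → v ∈ reachSet s o :=
    fun u v hu h => Relation.ReflTransGen.tail hu h
  -- crossing flip edges go from reachSet to its complement
  have hcross : ∀ u v, ¬((u ∈ reachSet s o) ↔ (v ∈ reachSet s o)) → o v u →
      u ∈ reachSet s o ∧ v ∉ reachSet s o := by
    intro u v hne hvu
    have hv : v ∉ reachSet s o := by
      intro hv
      exact hne (iff_of_true (hclose v u hv hvu) hv)
    have hu : u ∈ reachSet s o := by
      by_contra hu
      exact hne (iff_of_false hu hv)
    exact ⟨hu, hv⟩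
  have key : ∀ a b, Relation.TransGen (flipStep s o) a b →
      (a ∈ reachSet s o ∧ b ∉ reachSet s o) ∨
      ((a ∈ reachSet s o ↔ b ∈ reachSet s o) ∧ Relation.TransGen o a b) := by
    intro a b h
    induction h with
    | single h' =>
      rcases h' with ⟨hiff, hab⟩ | ⟨hne, hba⟩
      · exact Or.inr ⟨hiff, Relation.TransGen.single hab⟩
      · exact Or.inl (hcross _ _ hne hba)
    | tail h' hstep ih =>
      rename_i b c
      rcases ih with ⟨ha, hb⟩ | ⟨hiff, htg⟩
      · rcases hstep with ⟨hiff2, hbc⟩ | ⟨hne, hcb⟩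
        · exact Or.inl ⟨ha, fun hc => hb (hiff2.mpr hc)⟩
        · exact absurd (hcross _ _ hne hcb).1 hb
      · rcases hstep with ⟨hiff2, hbc⟩ | ⟨hne, hcb⟩
        · exact Or.inr ⟨hiff.trans hiff2, htg.tail hbc⟩
        · obtain ⟨hb, hc⟩ := hcross _ _ hne hcb
          exact Or.inl ⟨hiff.mpr hb, hc⟩
  have hacyc' : ∀ v, ¬ Relation.TransGen (flipStep s o) v v := by
    intro v hv
    rcases key v v hv with ⟨h1, h2⟩ | ⟨_, h⟩
    · exact h2 h1
    · exact hacyc v h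
  have hsubR : reachSet s o ⊆ reachSet s (flipStep s o) := by
    intro w hw
    induction hw with
    | refl => exact Relation.ReflTransGen.refl
    | tail h hstep ih =>
      rename_i b c
      have hb : b ∈ reachSet s o := h
      have hc : c ∈ reachSet s o := hclose _ _ hb hstep
      exact Relation.ReflTransGen.tail ih (Or.inl ⟨iff_of_true hb hc, hstep⟩)
  have hs : s ∈ reachSet s o := Relation.ReflTransGen.refl
  obtain ⟨t, ht⟩ : ∃ t, t ∉ reachSet s o := by
    by_contra h
    push_neg at h
    exact hR (Set.eq_univ_of_forall h)
  have walklem : ∀ (a b : V), G.Walk a b → a ∈ reachSet s o → b ∉ reachSet s o →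
      ∃ u v, G.Adj u v ∧ u ∈ reachSet s o ∧ v ∉ reachSet s o := by
    intro a b p
    induction p with
    | nil => intro ha hb; exact absurd ha hb
    | @cons u x w h p ih =>
      intro ha hb
      by_cases hx : x ∈ reachSet s o
      · exact ih hx hb
      · exact ⟨u, x, h, ha, hx⟩
  obtain ⟨p⟩ := hconn s t
  obtain ⟨u, v, hadj, hu, hv⟩ := walklem s t p hs ht
  have hvu : o v u := by
    rcases htotal u v hadj with huv | hvu
    · exact absurd (hclose _ _ hu huv) hv
    · exact hvu
  have hflip : flipStep s o u v :=
    Or.inr ⟨fun hiff => hv (hiff.mp hu), hvu⟩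
  have hvreach : v ∈ reachSet s (flipStep s o) :=
    Relation.ReflTransGen.tail (hsubR hu) hflip
  refine ⟨hacyc', ?_⟩
  rw [Set.ssubset_def]
  exact ⟨hsubR, fun h => hv (h hvreach)⟩
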